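/- Assume a < b and 2r ≤ a². If λ is a real root of the characteristic polynomial f with λ ∉ {−a², −b²} and the multiplicity of λ is at least 2, then there exists at least one point at which 𝒮 and 𝒫 are tangent. -/

import Mathlib

open Matrix Polynomial

/-- The 4×4 matrix of the elliptic paraboloid x²/a² + y²/b² - z = 0. -/
noncomputable def Pmat (a b : ℝ) : Matrix (Fin 4) (Fin 4) ℝ :=
  !![1/a^2, 0, 0, 0;
     0, 1/b^2, 0, 0;
     0, 0, 0, -(1/2 : ℝ);
     0, 0, -(1/2 : ℝ), 0]

/-- The 4×4 matrix of the sphere (x-x_c)² + (y-y_c)² + (z-z_c)² = r². -/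
noncomputable def Smat (xc yc zc r : ℝ) : Matrix (Fin 4) (Fin 4) ℝ :=
  !![1, 0, 0, -xc;
     0, 1, 0, -yc;
     0, 0, 1, -zc;
     -xc, -yc, -zc, xc^2 + yc^2 + zc^2 - r^2]

/-- The characteristic polynomial f(λ) = det(λP + S), as a real polynomial in λ. -/
noncomputable def charPoly (a b xc yc zc r : ℝ) : Polynomial ℝ :=
  Matrix.det ((X : Polynomial ℝ) • (Pmat a b).map C + (Smat xc yc zc r).map C)

/-- The sphere and the paraboloid are tangent at the point (x,y,z):
with X = (x,y,z,1)ᵗ one has XᵗPX = 0, XᵗSX = 0 and for every Y,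
YᵗPX = 0 iff YᵗSX = 0 (same tangent plane). -/
def TangentAt (a b xc yc zc r x y z : ℝ) : Prop :=
  ![x, y, z, 1] ⬝ᵥ (Pmat a b).mulVec ![x, y, z, 1] = 0 ∧
  ![x, y, z, 1] ⬝ᵥ (Smat xc yc zc r).mulVec ![x, y, z, 1] = 0 ∧
  ∀ Y : Fin 4 → ℝ,
    Y ⬝ᵥ (Pmat a b).mulVec ![x, y, z, 1] = 0 ↔
    Y ⬝ᵥ (Smat xc yc zc r).mulVec ![x, y, z, 1] = 0

set_option maxHeartbeats 2000000 in
/-- (a < b, smallness) a multiple real root different from -a²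
and -b² forces the existence of a tangency point. -/
theorem multiple_root_implies_tangent (a b r xc yc zc : ℝ)
    (ha : 0 < a) (hab : a < b) (hr : 0 < r) (hsmall : 2*r ≤ a^2)
    (l : ℝ) (hroot : (charPoly a b xc yc zc r).IsRoot l)
    (hla : l ≠ -a^2) (hlb : l ≠ -b^2)
    (hmult : 2 ≤ rootMultiplicity l (charPoly a b xc yc zc r)) :
    ∃ x y z : ℝ, TangentAt a b xc yc zc r x y z := by
  have ha0 : a ≠ 0 := ha.ne'
  have hb0 : b ≠ 0 := (ha.trans hab).ne'
  have hu : l + a^2 ≠ 0 := fun h => hla (by linarith)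
  have hv : l + b^2 ≠ 0 := fun h => hlb (by linarith)
  set p0 : Polynomial ℝ :=
    C (1/(a^2*b^2)) * (X + C (a^2)) * (X + C (b^2)) *
      (C (xc^2+yc^2-r^2) - C zc * X - C (1/4) * X^2)
    - C (yc^2/a^2) * (X + C (a^2)) - C (xc^2/b^2) * (X + C (b^2)) with hp0def
  have key : ∀ t : ℝ, (charPoly a b xc yc zc r).eval t = p0.eval t := by
    intro t
    have h1 : (charPoly a b xc yc zc r).eval t
        = (((X : Polynomial ℝ) • (Pmat a b).map C + (Smat xc yc zc r).map C).map
            (evalRingHom t)).det := by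
      rw [charPoly, ← coe_evalRingHom, RingHom.map_det, RingHom.mapMatrix_apply]
    rw [h1, hp0def]
    simp [Matrix.det_succ_row_zero, Fin.sum_univ_succ, Pmat, Smat, Matrix.map_apply,
      Matrix.add_apply, Matrix.smul_apply, smul_eq_mul,
      show (Fin.castSucc 2 : Fin 4) = 2 from rfl, show (Fin.castSucc 1 : Fin 4) = 1 from rfl,
      show (Fin.castSucc 0 : Fin 4) = 0 from rfl]
    field_simp
    simp [show (Fin.succAbove (3 : Fin 4) 2 : Fin 4) = 2 from rfl]
    ring
  have hpp : charPoly a b xc yc zc r = p0 := Polynomial.funext key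
  have E1 : p0.eval l = 0 := by rw [← hpp]; exact hroot
  have P1ab : a^2*b^2*((l+a^2)*(l+b^2)*(4*(xc^2+yc^2-r^2) - 4*zc*l - l^2)
      - 4*b^2*yc^2*(l+a^2) - 4*a^2*xc^2*(l+b^2)) = 0 := by
    rw [hp0def] at E1; simp at E1
    field_simp at E1
    linear_combination (a^2*b^2) * E1
  have Q1 : (l+a^2)*(l+b^2)*(4*(xc^2+yc^2-r^2) - 4*zc*l - l^2)
      - 4*b^2*yc^2*(l+a^2) - 4*a^2*xc^2*(l+b^2) = 0 := by
    rcases mul_eq_zero.mp P1ab with h | h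
    · exact absurd h (by positivity)
    · exact h
  have hdvd : (X - C l)^2 ∣ charPoly a b xc yc zc r :=
    dvd_trans (pow_dvd_pow _ hmult) (Polynomial.pow_rootMultiplicity_dvd _ l)
  obtain ⟨q, hq⟩ := hdvd
  have hder : (Polynomial.derivative (charPoly a b xc yc zc r)).eval l = 0 := by
    rw [hq]; simp [Polynomial.derivative_mul, Polynomial.derivative_pow]
  rw [hpp, hp0def] at hder
  simp [Polynomial.derivative_mul, Polynomial.derivative_pow] at hder
  have P2ab : a^2*b^2*((l+a^2+(l+b^2))*(4*(xc^2+yc^2-r^2) - 4*zc*l - l^2)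
      + (l+a^2)*(l+b^2)*(-4*zc-2*l) - 4*b^2*yc^2 - 4*a^2*xc^2) = 0 := by
    field_simp at hder
    linear_combination (a^2*b^2) * hder
  have Q2 : (l+a^2+(l+b^2))*(4*(xc^2+yc^2-r^2) - 4*zc*l - l^2)
      + (l+a^2)*(l+b^2)*(-4*zc-2*l) - 4*b^2*yc^2 - 4*a^2*xc^2 = 0 := by
    rcases mul_eq_zero.mp P2ab with h | h
    · exact absurd h (by positivity)
    · exact h
  have hl0 : l ≠ 0 := by
    intro h
    rw [h] at Q1
    have hrr : a^2*b^2*r^2 = 0 := by linear_combination (-1/4 : ℝ) * Q1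
    simp [pow_eq_zero_iff, ha0, hb0] at hrr
    exact hr.ne' hrr
  set x := a^2*xc/(l+a^2) with hx
  set y := b^2*yc/(l+b^2) with hy
  set z := l/2 + zc with hz
  have hG1 : ![x, y, z, 1] ⬝ᵥ (Pmat a b).mulVec ![x, y, z, 1] = 0 := by
    simp [Pmat, Matrix.mulVec, dotProduct, Fin.sum_univ_four, hx, hy, hz,
      Matrix.vecHead, Matrix.vecTail]
    field_simp
    linear_combination ((l+a^2)*(l+b^2)) * Q2 - ((2*l+a^2+b^2)) * Q1
  have hSP : (Smat xc yc zc r).mulVec ![x, y, z, 1]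
      = (-l) • (Pmat a b).mulVec ![x, y, z, 1] := by
    funext i
    fin_cases i <;>
      simp [Pmat, Smat, Matrix.mulVec, dotProduct, Fin.sum_univ_four, hx, hy, hz,
        Matrix.vecHead, Matrix.vecTail, smul_eq_mul] <;>
      field_simp
    · ring
    · ring
    · linear_combination Q1
  refine ⟨x, y, z, hG1, ?_, ?_⟩
  · rw [hSP, dotProduct_smul, hG1]; simp
  · intro Y
    rw [hSP, dotProduct_smul, smul_eq_mul]
    constructor
    · intro h; rw [h, mul_zero]
    · intro h
      rcases mul_eq_zero.mp h with h' | h'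
      · exact absurd (neg_eq_zero.mp h') hl0
      · exact h'
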